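/- Let ε_i, ε_j, ε_{j'} be three mutually independent random vectors in ℝ^p with i.i.d. N(0,σ²) coordinates, let c_{ij}, c_{ij'} ∈ ℝ^p be fixed vectors with c_{jj'} := c_{ij'} − c_{ij}, and set A_{ij} = ‖c_{ij} + ε_i − ε_j‖₂, A_{ij'} = ‖c_{ij'} + ε_i − ε_{j'}‖₂, λ_{ij} = ‖c_{ij}‖₂/(√2 σ), λ_{ij'} = ‖c_{ij'}‖₂/(√2 σ), λ_{jj'} = ‖c_{jj'}‖₂/(√2 σ). Then cov(A_{ij}, A_{ij'}) ≥ −σ²(p + λ_{ij}² + λ_{ij'}² − λ_{jj'}²) − E(A_{ij}) E(A_{ij'}). -/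

import Mathlib

open MeasureTheory ProbabilityTheory
open scoped NNReal ENNReal

section gaussAux
open Real Set

lemma sq_exp_int {b : ℝ} (hb : 0 < b) :
    ∫ x : ℝ, x ^ 2 * Real.exp (-b * x ^ 2) = (1 / b) ^ ((3:ℝ)/2) * (Real.sqrt π / 2) := by
  have key : (∫ x in Ioi (0:ℝ), ((2:ℝ) * x ^ ((2:ℝ) - 1)) •
      ((fun t : ℝ => t ^ ((1:ℝ)/2) * Real.exp (-(b * t))) (x ^ (2:ℝ))))
      = ∫ t in Ioi (0:ℝ), t ^ ((1:ℝ)/2) * Real.exp (-(b * t)) :=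
    integral_comp_rpow_Ioi_of_pos (g := fun t : ℝ => t ^ ((1:ℝ)/2) * Real.exp (-(b * t)))
      (p := 2) (by norm_num)
  have hG : ∫ t in Ioi (0:ℝ), t ^ ((1:ℝ)/2) * Real.exp (-(b * t))
      = (1 / b) ^ ((3:ℝ)/2) * Real.Gamma ((3:ℝ)/2) := by
    have := Real.integral_rpow_mul_exp_neg_mul_Ioi (a := (3:ℝ)/2) (r := b) (by norm_num) hb
    rw [← this]
    norm_num
  have hGam : Real.Gamma ((3:ℝ)/2) = Real.sqrt π / 2 := by
    have h12 : ((3:ℝ)/2) = 1/2 + 1 := by norm_num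
    rw [h12, Real.Gamma_add_one (by norm_num), Real.Gamma_one_half_eq]
    ring
  have hL : (∫ x in Ioi (0:ℝ), ((2:ℝ) * x ^ ((2:ℝ) - 1)) •
      ((fun t : ℝ => t ^ ((1:ℝ)/2) * Real.exp (-(b * t))) (x ^ (2:ℝ))))
      = 2 * ∫ x in Ioi (0:ℝ), x ^ 2 * Real.exp (-b * x ^ 2) := by
    rw [← integral_const_mul]
    refine setIntegral_congr_fun measurableSet_Ioi (fun x hx => ?_)
    have hx0 : (0:ℝ) ≤ x := le_of_lt hx
    have h2 : x ^ ((2:ℝ)) = x ^ 2 := by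
      rw [show ((2:ℝ)) = ((2:ℕ):ℝ) by norm_num, Real.rpow_natCast]
    have h1 : x ^ ((2:ℝ) - 1) = x := by
      norm_num
    have h3 : (x ^ (2:ℝ)) ^ ((1:ℝ)/2) = x := by
      rw [← Real.rpow_mul hx0]
      norm_num
    simp only [smul_eq_mul]
    rw [h1, h3, h2]
    ring
  have habs : ∫ x : ℝ, x ^ 2 * Real.exp (-b * x ^ 2)
      = 2 * ∫ x in Ioi (0:ℝ), x ^ 2 * Real.exp (-b * x ^ 2) := by
    rw [← integral_comp_abs (f := fun x => x ^ 2 * Real.exp (-b * x ^ 2))]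
    congr 1
    ext x
    rw [sq_abs]
  rw [habs, ← hL, key, hG, hGam]

lemma gaussian_integral_eq {v : ℝ≥0} (hv : v ≠ 0) (g : ℝ → ℝ) :
    ∫ x, g x ∂(gaussianReal 0 v) = ∫ x, gaussianPDFReal 0 v x * g x := by
  rw [gaussianReal_of_var_ne_zero 0 hv]
  have : (gaussianPDF 0 v) = fun x => ((gaussianPDFReal 0 v x).toNNReal : ℝ≥0∞) := rfl
  rw [this, integral_withDensity_eq_integral_smul ((measurable_gaussianPDFReal 0 v).real_toNNReal) g]
  congr 1
  ext x
  rw [NNReal.smul_def, Real.coe_toNNReal _ (gaussianPDFReal_nonneg 0 v x), smul_eq_mul]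

lemma gaussian_pdf_mul_sq {v : ℝ≥0} (hv : v ≠ 0) (x : ℝ) :
    gaussianPDFReal 0 v x * x ^ 2
      = (Real.sqrt (2 * π * v))⁻¹ * (x ^ 2 * Real.exp (-(((2:ℝ)*v)⁻¹) * x ^ 2)) := by
  have hvpos : (0:ℝ) < v := by positivity
  rw [gaussianPDFReal]
  have : -(x - 0) ^ 2 / (2 * v) = -(((2:ℝ)*v)⁻¹) * x ^ 2 := by
    field_simp
    ring
  rw [this]
  ring

lemma gaussian_sq {v : ℝ≥0} (hv : v ≠ 0) :
    ∫ x, x ^ 2 ∂(gaussianReal 0 v) = v := by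
  have hvpos : (0:ℝ) < v := lt_of_le_of_ne v.2 (by exact_mod_cast (Ne.symm hv))
  have hb : (0:ℝ) < ((2:ℝ)*v)⁻¹ := by positivity
  rw [gaussian_integral_eq hv]
  simp_rw [gaussian_pdf_mul_sq hv]
  rw [integral_const_mul, sq_exp_int hb]
  have h1 : (1 / ((2:ℝ)*v)⁻¹) = 2*v := by field_simp
  rw [h1]
  have h2v : (0:ℝ) ≤ 2*v := by positivity
  have h2 : ((2:ℝ)*v) ^ ((3:ℝ)/2) = Real.sqrt (2*v) ^ (3:ℕ) := by
    rw [show (3:ℝ)/2 = (1/2)*((3:ℕ):ℝ) by norm_num, Real.rpow_mul h2v,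
      Real.rpow_natCast, ← Real.sqrt_eq_rpow]
  have h3 : Real.sqrt (2 * π * v) = Real.sqrt π * Real.sqrt (2*v) := by
    rw [show 2 * π * (v:ℝ) = π * (2*v) by ring, Real.sqrt_mul pi_pos.le]
  rw [h2, h3]
  have hs : (0:ℝ) < Real.sqrt (2*v) := Real.sqrt_pos.2 (by positivity)
  have hs2 : Real.sqrt (2*v) ^ 2 = 2*v := Real.sq_sqrt h2v
  have hπ : (0:ℝ) < Real.sqrt π := Real.sqrt_pos.2 pi_pos
  set s := Real.sqrt (2*(v:ℝ)) with hsdef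
  set q := Real.sqrt π with hqdef
  have key : s^3*q = 2*(v:ℝ)*(q*s) := by
    have h' : s^3 = s^2 * s := by ring
    rw [h', hs2]; ring
  field_simp
  linarith [key]

lemma gaussian_sq_integrable {v : ℝ≥0} (hv : v ≠ 0) :
    Integrable (fun x : ℝ => x ^ 2) (gaussianReal 0 v) := by
  have hvpos : (0:ℝ) < v := lt_of_le_of_ne v.2 (by exact_mod_cast (Ne.symm hv))
  have hb : (0:ℝ) < ((2:ℝ)*v)⁻¹ := by positivity
  rw [gaussianReal_of_var_ne_zero 0 hv]
  have hpdf : (gaussianPDF 0 v) = fun x => ((gaussianPDFReal 0 v x).toNNReal : ℝ≥0∞) := rfl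
  rw [hpdf, integrable_withDensity_iff_integrable_smul
    ((measurable_gaussianPDFReal 0 v).real_toNNReal)]
  have : (fun x : ℝ => (gaussianPDFReal 0 v x).toNNReal • (x ^ 2))
      = fun x => (Real.sqrt (2 * π * v))⁻¹ * (x ^ 2 * Real.exp (-(((2:ℝ)*v)⁻¹) * x ^ 2)) := by
    ext x
    rw [NNReal.smul_def, Real.coe_toNNReal _ (gaussianPDFReal_nonneg 0 v x), smul_eq_mul,
      gaussian_pdf_mul_sq hv]
  rw [this]
  refine Integrable.const_mul ?_ _
  have := integrable_rpow_mul_exp_neg_mul_sq hb (s := 2) (by norm_num)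
  refine this.congr ?_
  refine Filter.Eventually.of_forall (fun x => ?_)
  have : x ^ ((2:ℕ):ℝ) = x ^ (2:ℕ) := Real.rpow_natCast x 2
  simp only [Nat.cast_ofNat] at this
  simp [this]

lemma gaussian_memL2 {v : ℝ≥0} (hv : v ≠ 0) :
    MemLp (id : ℝ → ℝ) 2 (gaussianReal 0 v) :=
  (memLp_two_iff_integrable_sq aestronglyMeasurable_id).2 (gaussian_sq_integrable hv)

lemma gaussian_mean {v : ℝ≥0} (hv : v ≠ 0) :
    ∫ x, x ∂(gaussianReal 0 v) = 0 := by
  have hint : Integrable (fun x : ℝ => x) (gaussianReal 0 v) :=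
    (gaussian_memL2 hv).integrable one_le_two
  have hmap : (gaussianReal 0 v).map (fun x => (-1 : ℝ) * x) = gaussianReal 0 v := by
    have h := gaussianReal_map_const_mul (μ := 0) (v := v) (-1 : ℝ)
    have hv1 : (NNReal.mk ((-1:ℝ)^2) (sq_nonneg _)) = 1 := by
      ext; norm_num
    rw [mul_zero, hv1, one_mul] at h
    exact h
  have h1 : ∫ x, x ∂(gaussianReal 0 v) = ∫ x, (-1 : ℝ) * x ∂(gaussianReal 0 v) := by
    conv_lhs => rw [← hmap]
    exact integral_map (φ := fun x => (-1:ℝ)*x) (f := fun x : ℝ => x)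
      ((measurable_id.const_mul _).aemeasurable) aestronglyMeasurable_id
  have h2 : ∫ x, (-1:ℝ) * x ∂(gaussianReal 0 v) = - ∫ x, x ∂(gaussianReal 0 v) := by
    rw [integral_const_mul]; ring
  linarith [h1, h2]
end gaussAux

section helpers
variable {Ω : Type*} [MeasurableSpace Ω] {P : Measure Ω} [IsProbabilityMeasure P]

omit [IsProbabilityMeasure P] in
lemma integrable_mul_of_memL2 {f g : Ω → ℝ} (hf : MemLp f 2 P) (hg : MemLp g 2 P) :
    Integrable (fun ω => f ω * g ω) P := by
  refine Integrable.mono' (((hf.integrable_sq).add (hg.integrable_sq)).div_const 2)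
    (hf.aestronglyMeasurable.mul hg.aestronglyMeasurable)
    (Filter.Eventually.of_forall fun ω => ?_)
  have h := sq_nonneg (|f ω| - |g ω|)
  simp only [Pi.add_apply, Real.norm_eq_abs, abs_mul]
  rw [← sq_abs (f ω), ← sq_abs (g ω)]
  nlinarith [abs_nonneg (f ω), abs_nonneg (g ω)]

lemma coord_integral (s : ℝ) (c1 c2 : ℝ) {X Y Z : Ω → ℝ}
    (hX : MemLp X 2 P) (hY : MemLp Y 2 P) (hZ : MemLp Z 2 P)
    (hX0 : ∫ ω, X ω ∂P = 0) (hY0 : ∫ ω, Y ω ∂P = 0) (hZ0 : ∫ ω, Z ω ∂P = 0)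
    (hX2 : ∫ ω, X ω * X ω ∂P = s)
    (hXY : ∫ ω, X ω * Y ω ∂P = 0) (hXZ : ∫ ω, X ω * Z ω ∂P = 0)
    (hYZ : ∫ ω, Y ω * Z ω ∂P = 0) :
    ∫ ω, (c1 + X ω - Y ω) * (c2 + X ω - Z ω) ∂P = c1 * c2 + s := by
  have iX : Integrable X P := hX.integrable one_le_two
  have iY : Integrable Y P := hY.integrable one_le_two
  have iZ : Integrable Z P := hZ.integrable one_le_two
  have iXX : Integrable (fun ω => X ω * X ω) P := integrable_mul_of_memL2 hX hX
  have iXY : Integrable (fun ω => X ω * Y ω) P := integrable_mul_of_memL2 hX hY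
  have iXZ : Integrable (fun ω => X ω * Z ω) P := integrable_mul_of_memL2 hX hZ
  have iYZ : Integrable (fun ω => Y ω * Z ω) P := integrable_mul_of_memL2 hY hZ
  have hfun : (fun ω => (c1 + X ω - Y ω) * (c2 + X ω - Z ω))
      = fun ω => c1 * c2 + ((c1 + c2) * X ω + ((-c1) * Z ω + ((-c2) * Y ω +
          (X ω * X ω + ((-1) * (X ω * Z ω) + ((-1) * (X ω * Y ω) + Y ω * Z ω)))))) := by
    funext ω; ring
  have I7 : Integrable (fun ω => (-1:ℝ) * (X ω * Y ω) + Y ω * Z ω) P :=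
    (iXY.const_mul _).add iYZ
  have I6 : Integrable (fun ω => (-1:ℝ) * (X ω * Z ω) + ((-1:ℝ) * (X ω * Y ω) + Y ω * Z ω)) P :=
    (iXZ.const_mul _).add I7
  have I5 : Integrable (fun ω => X ω * X ω +
      ((-1:ℝ) * (X ω * Z ω) + ((-1:ℝ) * (X ω * Y ω) + Y ω * Z ω))) P := iXX.add I6
  have I4 : Integrable (fun ω => (-c2) * Y ω + (X ω * X ω +
      ((-1:ℝ) * (X ω * Z ω) + ((-1:ℝ) * (X ω * Y ω) + Y ω * Z ω)))) P := (iY.const_mul _).add I5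
  have I3 : Integrable (fun ω => (-c1) * Z ω + ((-c2) * Y ω + (X ω * X ω +
      ((-1:ℝ) * (X ω * Z ω) + ((-1:ℝ) * (X ω * Y ω) + Y ω * Z ω))))) P := (iZ.const_mul _).add I4
  have I2 : Integrable (fun ω => (c1 + c2) * X ω + ((-c1) * Z ω + ((-c2) * Y ω + (X ω * X ω +
      ((-1:ℝ) * (X ω * Z ω) + ((-1:ℝ) * (X ω * Y ω) + Y ω * Z ω)))))) P := (iX.const_mul _).add I3
  rw [hfun]
  rw [integral_add (integrable_const _) I2, integral_add (iX.const_mul _) I3,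
    integral_add (iZ.const_mul _) I4, integral_add (iY.const_mul _) I5,
    integral_add iXX I6, integral_add (iXZ.const_mul _) I7,
    integral_add (iXY.const_mul _) iYZ]
  simp only [integral_const_mul, integral_const]
  rw [hX0, hY0, hZ0, hX2, hXY, hXZ, hYZ]
  simp
end helpers

/-- A family of random vectors in `ℝ^p` such that all coordinates (across the whole family)
are mutually independent and each coordinate is Gaussian `N(0, σ²)`. -/
def IIDGaussianCoords {Ω : Type*} [MeasurableSpace Ω] (P : Measure Ω)
    {ι : Type*} {p : ℕ} (σ : ℝ) (ε : ι → Ω → EuclideanSpace ℝ (Fin p)) : Prop :=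
  (∀ i, Measurable (ε i)) ∧
  iIndepFun (fun q : ι × Fin p => fun ω => ε q.1 ω q.2) P ∧
  ∀ i k, Measure.map (fun ω => ε i ω k) P = gaussianReal 0 ⟨σ ^ 2, sq_nonneg σ⟩

theorem stmt_8 {Ω : Type*} [MeasurableSpace Ω] (P : Measure Ω) [IsProbabilityMeasure P]
    (p : ℕ) (hp : 1 ≤ p) (σ : ℝ) (hσ : 0 < σ)
    (ε : Fin 3 → Ω → EuclideanSpace ℝ (Fin p))
    (hiid : IIDGaussianCoords P σ ε)
    (cij cij' : EuclideanSpace ℝ (Fin p)) :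
    (∫ ω, ‖cij + ε 0 ω - ε 1 ω‖ * ‖cij' + ε 0 ω - ε 2 ω‖ ∂P)
        - (∫ ω, ‖cij + ε 0 ω - ε 1 ω‖ ∂P) * ∫ ω, ‖cij' + ε 0 ω - ε 2 ω‖ ∂P
      ≥ -(σ ^ 2) * (p + (‖cij‖ / (Real.sqrt 2 * σ)) ^ 2
            + (‖cij'‖ / (Real.sqrt 2 * σ)) ^ 2 - (‖cij' - cij‖ / (Real.sqrt 2 * σ)) ^ 2)
        - (∫ ω, ‖cij + ε 0 ω - ε 1 ω‖ ∂P) * ∫ ω, ‖cij' + ε 0 ω - ε 2 ω‖ ∂P := by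
  obtain ⟨hmeas, hindep, hlaw⟩ := hiid
  set V : ℝ≥0 := ⟨σ ^ 2, sq_nonneg σ⟩ with hVdef
  have hV : V ≠ 0 := by
    intro h
    have : σ ^ 2 = 0 := congrArg NNReal.toReal h
    exact hσ.ne' (by nlinarith)
  have hVcoe : (V : ℝ) = σ ^ 2 := rfl
  -- coordinates
  have hXmeas : ∀ i k, Measurable (fun ω => ε i ω k) :=
    fun i k => (measurable_pi_apply k).comp ((WithLp.measurable_ofLp _ _).comp (hmeas i))
  have hXL2 : ∀ i k, MemLp (fun ω => ε i ω k) 2 P := by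
    intro i k
    have h := memLp_map_measure_iff (μ := P) (p := 2) (g := (id : ℝ → ℝ))
      (f := fun ω => ε i ω k) aestronglyMeasurable_id ((hXmeas i k).aemeasurable (μ := P))
    rw [hlaw i k] at h
    exact h.1 (gaussian_memL2 hV)
  have hXmean : ∀ i k, ∫ ω, ε i ω k ∂P = 0 := by
    intro i k
    have h := integral_map (μ := P) (φ := fun ω => ε i ω k) (f := fun x : ℝ => x)
      ((hXmeas i k).aemeasurable) aestronglyMeasurable_id
    rw [hlaw i k] at h
    rw [← h, gaussian_mean hV]
  have hXsq : ∀ i k, ∫ ω, (ε i ω k) * (ε i ω k) ∂P = σ ^ 2 := by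
    intro i k
    have h := integral_map (μ := P) (φ := fun ω => ε i ω k) (f := fun x : ℝ => x * x)
      ((hXmeas i k).aemeasurable) (measurable_id.mul measurable_id).aestronglyMeasurable
    rw [hlaw i k] at h
    rw [← h]
    have : (fun x : ℝ => x * x) = fun x : ℝ => x ^ 2 := by funext x; ring
    rw [this, gaussian_sq hV, hVcoe]
  have hXprod : ∀ (i : Fin 3) (k : Fin p) (j : Fin 3) (l : Fin p),
      ((i, k) : Fin 3 × Fin p) ≠ (j, l) → ∫ ω, (ε i ω k) * (ε j ω l) ∂P = 0 := by
    intro i k j l hne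
    have hind : IndepFun (fun ω => ε i ω k) (fun ω => ε j ω l) P :=
      hindep.indepFun hne
    have := hind.integral_mul_eq_mul_integral ((hXL2 i k).integrable one_le_two).aestronglyMeasurable
      ((hXL2 j l).integrable one_le_two).aestronglyMeasurable
    calc ∫ ω, (ε i ω k) * (ε j ω l) ∂P
        = (∫ ω, ε i ω k ∂P) * ∫ ω, ε j ω l ∂P := this
      _ = 0 := by rw [hXmean i k]; ring
  -- per-coordinate expectation
  have hcoord : ∀ k : Fin p,
      ∫ ω, (cij k + ε 0 ω k - ε 1 ω k) * (cij' k + ε 0 ω k - ε 2 ω k) ∂P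
        = cij k * cij' k + σ ^ 2 := by
    intro k
    refine coord_integral (σ ^ 2) (cij k) (cij' k) (hXL2 0 k) (hXL2 1 k) (hXL2 2 k)
      (hXmean 0 k) (hXmean 1 k) (hXmean 2 k) (hXsq 0 k)
      (hXprod 0 k 1 k (by simp)) (hXprod 0 k 2 k (by simp)) (hXprod 1 k 2 k (by simp))
  -- L² membership of coordinate differences
  have hUL2 : ∀ k : Fin p, MemLp (fun ω => cij k + ε 0 ω k - ε 1 ω k) 2 P :=
    fun k => ((memLp_const (cij k)).add (hXL2 0 k)).sub (hXL2 1 k)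
  have hVL2 : ∀ k : Fin p, MemLp (fun ω => cij' k + ε 0 ω k - ε 2 ω k) 2 P :=
    fun k => ((memLp_const (cij' k)).add (hXL2 0 k)).sub (hXL2 2 k)
  -- the vectors
  set u : Ω → EuclideanSpace ℝ (Fin p) := fun ω => cij + ε 0 ω - ε 1 ω with hu
  set v : Ω → EuclideanSpace ℝ (Fin p) := fun ω => cij' + ε 0 ω - ε 2 ω with hv
  have humeas : Measurable u := (measurable_const.add (hmeas 0)).sub (hmeas 1)
  have hvmeas : Measurable v := (measurable_const.add (hmeas 0)).sub (hmeas 2)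
  have hucoord : ∀ ω k, u ω k = cij k + ε 0 ω k - ε 1 ω k := fun ω k => rfl
  have hvcoord : ∀ ω k, v ω k = cij' k + ε 0 ω k - ε 2 ω k := fun ω k => rfl
  -- norms are in L²
  have hnormsq : ∀ (w : Ω → EuclideanSpace ℝ (Fin p)) (ω : Ω),
      ‖w ω‖ ^ 2 = ∑ k, (w ω k) ^ 2 := by
    intro w ω
    rw [EuclideanSpace.norm_eq, Real.sq_sqrt (by positivity)]
    congr 1
    ext k
    rw [Real.norm_eq_abs, sq_abs]
  have hAL2 : MemLp (fun ω => ‖u ω‖) 2 P := by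
    refine (memLp_two_iff_integrable_sq humeas.norm.aestronglyMeasurable).2 ?_
    have : (fun ω => ‖u ω‖ ^ 2) = fun ω => ∑ k, (cij k + ε 0 ω k - ε 1 ω k) ^ 2 := by
      funext ω; rw [hnormsq u ω]
      rfl
    rw [this]
    exact integrable_finset_sum _ (fun k _ => (hUL2 k).integrable_sq)
  have hBL2 : MemLp (fun ω => ‖v ω‖) 2 P := by
    refine (memLp_two_iff_integrable_sq hvmeas.norm.aestronglyMeasurable).2 ?_
    have : (fun ω => ‖v ω‖ ^ 2) = fun ω => ∑ k, (cij' k + ε 0 ω k - ε 2 ω k) ^ 2 := by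
      funext ω; rw [hnormsq v ω]
      rfl
    rw [this]
    exact integrable_finset_sum _ (fun k _ => (hVL2 k).integrable_sq)
  have hABint : Integrable (fun ω => ‖u ω‖ * ‖v ω‖) P := integrable_mul_of_memL2 hAL2 hBL2
  -- inner product expansion
  have hinner : ∀ ω, (inner ℝ (u ω) (v ω) : ℝ)
      = ∑ k, (cij k + ε 0 ω k - ε 1 ω k) * (cij' k + ε 0 ω k - ε 2 ω k) := by
    intro ω
    rw [PiLp.inner_apply]
    congr 1
    funext k; rw [RCLike.inner_apply', conj_trivial, hucoord, hvcoord]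
  have hInnerInt : Integrable (fun ω => (inner ℝ (u ω) (v ω) : ℝ)) P := by
    have : (fun ω => (inner ℝ (u ω) (v ω) : ℝ))
        = fun ω => ∑ k, (cij k + ε 0 ω k - ε 1 ω k) * (cij' k + ε 0 ω k - ε 2 ω k) := by
      funext ω; exact hinner ω
    rw [this]
    exact integrable_finset_sum _ (fun k _ => integrable_mul_of_memL2 (hUL2 k) (hVL2 k))
  have hInnerVal : ∫ ω, (inner ℝ (u ω) (v ω) : ℝ) ∂P
      = (∑ k, cij k * cij' k) + p * σ ^ 2 := by
    have h1 : (fun ω => (inner ℝ (u ω) (v ω) : ℝ))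
        = fun ω => ∑ k, (cij k + ε 0 ω k - ε 1 ω k) * (cij' k + ε 0 ω k - ε 2 ω k) := by
      funext ω; exact hinner ω
    rw [h1, integral_finset_sum _ (fun k _ => integrable_mul_of_memL2 (hUL2 k) (hVL2 k))]
    rw [Finset.sum_congr rfl (fun k _ => hcoord k)]
    rw [Finset.sum_add_distrib]
    simp [Finset.card_univ, mul_comm]
  -- pointwise bound and integral comparison
  have hpt : ∀ ω, -(inner ℝ (u ω) (v ω) : ℝ) ≤ ‖u ω‖ * ‖v ω‖ := by
    intro ω
    have h1 : |(inner ℝ (u ω) (v ω) : ℝ)| ≤ ‖u ω‖ * ‖v ω‖ := abs_real_inner_le_norm _ _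
    exact (neg_le_abs (inner ℝ (u ω) (v ω) : ℝ)).trans h1
  have hmono : ∫ ω, -(inner ℝ (u ω) (v ω) : ℝ) ∂P ≤ ∫ ω, ‖u ω‖ * ‖v ω‖ ∂P :=
    integral_mono hInnerInt.neg hABint hpt
  have hNegVal : ∫ ω, -(inner ℝ (u ω) (v ω) : ℝ) ∂P
      = -((∑ k, cij k * cij' k) + p * σ ^ 2) := by
    rw [integral_neg, hInnerVal]
  -- identify the RHS constant
  have hsum_inner : (∑ k, cij k * cij' k) = (inner ℝ cij cij' : ℝ) := by
    rw [PiLp.inner_apply]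
    congr 1
    funext k; rw [RCLike.inner_apply', conj_trivial]
  have hns : ‖cij' - cij‖ ^ 2 = ‖cij'‖ ^ 2 - 2 * (inner ℝ cij cij' : ℝ) + ‖cij‖ ^ 2 := by
    rw [norm_sub_sq_real, real_inner_comm]
  have hsσ : (Real.sqrt 2 * σ) ^ 2 = 2 * σ ^ 2 := by
    rw [mul_pow, Real.sq_sqrt (by norm_num : (0:ℝ) ≤ 2)]
  have hrhs : -(σ ^ 2) * (p + (‖cij‖ / (Real.sqrt 2 * σ)) ^ 2
        + (‖cij'‖ / (Real.sqrt 2 * σ)) ^ 2 - (‖cij' - cij‖ / (Real.sqrt 2 * σ)) ^ 2)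
      = -((∑ k, cij k * cij' k) + p * σ ^ 2) := by
    rw [hsum_inner]
    rw [div_pow, div_pow, div_pow, hsσ, hns]
    have hσ2 : σ ^ 2 ≠ 0 := by positivity
    field_simp
    ring
  -- conclude
  rw [ge_iff_le, hrhs]
  have : -((∑ k, cij k * cij' k) + p * σ ^ 2) ≤ ∫ ω, ‖u ω‖ * ‖v ω‖ ∂P := by
    rw [← hNegVal]; exact hmono
  have hfinal : -((∑ k, cij k * cij' k) + ↑p * σ ^ 2)
      ≤ ∫ ω, ‖cij + ε 0 ω - ε 1 ω‖ * ‖cij' + ε 0 ω - ε 2 ω‖ ∂P := this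
  linarith [hfinal]
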